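/- arXiv:2305.18114 — 5 statements merged into one kernel-verified Lean document; each statement's English description precedes it below -/
import Mathlib

section
/- Let FS₁ > 0, and suppose FS₁·Δ = RF₂ + S⁻ - S⁺ where S⁻ = Σ over negatively-entering groups g of P(g)·Δ(g) and S⁺ = Σ over positively-entering groups g of P(g)·Δ(g), with each Δ(g) ∈ [L, U] for reals L ≤ 0 ≤ U, Σ_neg P(g) ≤ q₀, and Σ_pos P(g) ≤ q₁ for nonnegative q₀, q₁. Then RF₂/FS₁ + q₀·L/FS₁ - q₁·U/FS₁ ≤ Δ ≤ RF₂/FS₁ + q₀·U/FS₁ - q₁·L/FS₁. -/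
theorem stmt_5 {n m : ℕ} (FS1 RF2 Δ L U q0 q1 : ℝ)
    (P Δneg : Fin n → ℝ) (Q Δpos : Fin m → ℝ)
    (hFS1 : 0 < FS1) (hL : L ≤ 0) (hU : 0 ≤ U)
    (hPnn : ∀ i, 0 ≤ P i) (hQnn : ∀ j, 0 ≤ Q j)
    (hΔnegL : ∀ i, L ≤ Δneg i) (hΔnegU : ∀ i, Δneg i ≤ U)
    (hΔposL : ∀ j, L ≤ Δpos j) (hΔposU : ∀ j, Δpos j ≤ U)
    (hq0 : 0 ≤ q0) (hq1 : 0 ≤ q1)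
    (hsumP : ∑ i, P i ≤ q0) (hsumQ : ∑ j, Q j ≤ q1)
    (hid : FS1 * Δ = RF2 + ∑ i, P i * Δneg i - ∑ j, Q j * Δpos j) :
    RF2 / FS1 + q0 * L / FS1 - q1 * U / FS1 ≤ Δ ∧
    Δ ≤ RF2 / FS1 + q0 * U / FS1 - q1 * L / FS1 := by
  have hPlo : q0 * L ≤ ∑ i, P i * Δneg i := by
    calc q0 * L ≤ (∑ i, P i) * L :=
          mul_le_mul_of_nonpos_right hsumP hL
      _ = ∑ i, P i * L := by rw [Finset.sum_mul]
      _ ≤ ∑ i, P i * Δneg i :=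
          Finset.sum_le_sum fun i _ => mul_le_mul_of_nonneg_left (hΔnegL i) (hPnn i)
  have hPhi : ∑ i, P i * Δneg i ≤ q0 * U := by
    calc ∑ i, P i * Δneg i ≤ ∑ i, P i * U :=
          Finset.sum_le_sum fun i _ => mul_le_mul_of_nonneg_left (hΔnegU i) (hPnn i)
      _ = (∑ i, P i) * U := by rw [Finset.sum_mul]
      _ ≤ q0 * U := mul_le_mul_of_nonneg_right hsumP hU
  have hQlo : q1 * L ≤ ∑ j, Q j * Δpos j := by
    calc q1 * L ≤ (∑ j, Q j) * L :=
          mul_le_mul_of_nonpos_right hsumQ hL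
      _ = ∑ j, Q j * L := by rw [Finset.sum_mul]
      _ ≤ ∑ j, Q j * Δpos j :=
          Finset.sum_le_sum fun j _ => mul_le_mul_of_nonneg_left (hΔposL j) (hQnn j)
  have hQhi : ∑ j, Q j * Δpos j ≤ q1 * U := by
    calc ∑ j, Q j * Δpos j ≤ ∑ j, Q j * U :=
          Finset.sum_le_sum fun j _ => mul_le_mul_of_nonneg_left (hΔposU j) (hQnn j)
      _ = (∑ j, Q j) * U := by rw [Finset.sum_mul]
      _ ≤ q1 * U := mul_le_mul_of_nonneg_right hsumQ hU
  constructor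
  · rw [← add_div, ← sub_div, div_le_iff₀ hFS1, mul_comm Δ FS1, hid]
    linarith
  · rw [← add_div, ← sub_div, le_div_iff₀ hFS1, mul_comm Δ FS1, hid]
    linarith
end

section
/- Let T ≥ 1, FS : Fin T → ℝ with FS 0 ≠ 0, and define ρ_k = FS_{k-1} - FS_k for k = 2,…,T. Suppose RF : Fin T → ℝ and Δ : Fin T → ℝ satisfy RF_t = FS₁·Δ^{t-1} - Σ_{k=2}^{t} ρ_k·Δ^{t-k} for each t = 1,…,T (with the empty sum convention for t=1). Then Δ = P⁻¹·RF where P is the lower-triangular matrix with diagonal FS₁ and entry (t, t-k+1) equal to -ρ_k; in particular Δ is uniquely determined by RF and FS. -/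
theorem stmt_9 (T : ℕ) (hT : 1 ≤ T) (FS RF Δ : Fin T → ℝ)
    (hFS : FS ⟨0, hT⟩ ≠ 0)
    (P : Matrix (Fin T) (Fin T) ℝ)
    (hP : ∀ i j : Fin T, P i j =
      if i = j then FS ⟨0, hT⟩
      else if j < i then
        -(FS ⟨(i : ℕ) - j - 1, Nat.lt_of_le_of_lt (by omega) i.isLt⟩ -
          FS ⟨(i : ℕ) - j, Nat.lt_of_le_of_lt (Nat.sub_le _ _) i.isLt⟩)
      else 0)
    (hsys : ∀ s : Fin T, RF s = FS ⟨0, hT⟩ * Δ s -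
      ∑ j ∈ Finset.univ.filter (fun j : Fin T => j < s),
        (FS ⟨(s : ℕ) - j - 1, Nat.lt_of_le_of_lt (by omega) s.isLt⟩ -
         FS ⟨(s : ℕ) - j, Nat.lt_of_le_of_lt (Nat.sub_le _ _) s.isLt⟩) * Δ j) :
    Δ = P⁻¹.mulVec RF := by
  have hLT : P.BlockTriangular (OrderDual.toDual) := by
    intro i j hij
    rw [hP]
    rw [if_neg (by exact fun h => absurd h (by simpa using (ne_of_gt hij))),
      if_neg (by exact not_lt.2 (le_of_lt hij))]
  have hdet : P.det = FS ⟨0, hT⟩ ^ T := by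
    rw [Matrix.det_of_lowerTriangular P hLT]
    rw [Finset.prod_congr rfl (fun i _ => by rw [hP, if_pos rfl])]
    simp
  have hunit : IsUnit P.det := by
    rw [hdet]; exact (isUnit_iff_ne_zero.2 (pow_ne_zero _ hFS))
  have hmv : P.mulVec Δ = RF := by
    funext s
    rw [hsys s, Matrix.mulVec, dotProduct]
    rw [← Finset.add_sum_erase Finset.univ _ (Finset.mem_univ s)]
    rw [hP, if_pos rfl]
    have hterm : ∀ j ∈ Finset.univ.erase s,
        P s j * Δ j = if j < s then
          -((FS ⟨(s : ℕ) - j - 1, Nat.lt_of_le_of_lt (by omega) s.isLt⟩ -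
           FS ⟨(s : ℕ) - j, Nat.lt_of_le_of_lt (Nat.sub_le _ _) s.isLt⟩) * Δ j) else 0 := by
      intro j hj
      have hne : j ≠ s := Finset.ne_of_mem_erase hj
      rw [hP, if_neg (fun h => hne h.symm)]
      by_cases hjl : j < s
      · rw [if_pos hjl, if_pos hjl]; ring
      · rw [if_neg hjl, if_neg hjl, zero_mul]
    rw [Finset.sum_congr rfl hterm, Finset.sum_ite, Finset.sum_const_zero, add_zero,
      Finset.sum_neg_distrib]
    have hfilt : (Finset.univ.erase s).filter (fun j : Fin T => j < s)
        = Finset.univ.filter (fun j : Fin T => j < s) := by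
      ext j; simp (config := {contextual := true}) [Finset.mem_erase, ne_of_lt]
    rw [hfilt]; ring
  rw [← hmv, Matrix.mulVec_mulVec, Matrix.nonsing_inv_mul P hunit, Matrix.one_mulVec]
end

section
/- Let FS₁ > 0 and for a fixed t ≥ 2 suppose FS₁·Δ = RF_t + Σ_{k=2}^t Σ_{g ∈ G⁻_k} P(g)·Δ(g) - Σ_{k=2}^t Σ_{g ∈ G⁺_k} P(g)·Δ(g), where all P(g) ≥ 0, each Δ(g) ∈ [L_t, U_t] with L_t ≤ 0 ≤ U_t, Σ_{k,g∈G⁻_k} P(g) ≤ q₀ and Σ_{k,g∈G⁺_k} P(g) ≤ q₁. Then RF_t/FS₁ + q₀·L_t/FS₁ - q₁·U_t/FS₁ ≤ Δ ≤ RF_t/FS₁ + q₀·U_t/FS₁ - q₁·L_t/FS₁. -/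
lemma sum_bounds {ι : Type} (t : ℕ) (G : ℕ → Finset ι) (P Δg : ι → ℝ)
    (Lt Ut q : ℝ) (hL : Lt ≤ 0) (hU : 0 ≤ Ut)
    (hP : ∀ k ∈ Finset.Icc 2 t, ∀ g ∈ G k, 0 ≤ P g)
    (hΔ : ∀ k ∈ Finset.Icc 2 t, ∀ g ∈ G k, Lt ≤ Δg g ∧ Δg g ≤ Ut)
    (hq : ∑ k ∈ Finset.Icc 2 t, ∑ g ∈ G k, P g ≤ q) :
    q * Lt ≤ (∑ k ∈ Finset.Icc 2 t, ∑ g ∈ G k, P g * Δg g) ∧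
    (∑ k ∈ Finset.Icc 2 t, ∑ g ∈ G k, P g * Δg g) ≤ q * Ut := by
  constructor
  · calc q * Lt ≤ (∑ k ∈ Finset.Icc 2 t, ∑ g ∈ G k, P g) * Lt := by
          apply mul_le_mul_of_nonpos_right hq hL
    _ = ∑ k ∈ Finset.Icc 2 t, ∑ g ∈ G k, P g * Lt := by
          rw [Finset.sum_mul]; exact Finset.sum_congr rfl fun k _ => Finset.sum_mul ..
    _ ≤ _ := by
          refine Finset.sum_le_sum fun k hk => Finset.sum_le_sum fun g hg => ?_
          exact mul_le_mul_of_nonneg_left (hΔ k hk g hg).1 (hP k hk g hg)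
  · calc (∑ k ∈ Finset.Icc 2 t, ∑ g ∈ G k, P g * Δg g)
        ≤ ∑ k ∈ Finset.Icc 2 t, ∑ g ∈ G k, P g * Ut := by
          refine Finset.sum_le_sum fun k hk => Finset.sum_le_sum fun g hg => ?_
          exact mul_le_mul_of_nonneg_left (hΔ k hk g hg).2 (hP k hk g hg)
    _ = (∑ k ∈ Finset.Icc 2 t, ∑ g ∈ G k, P g) * Ut := by
          rw [Finset.sum_mul]; exact Finset.sum_congr rfl fun k _ => (Finset.sum_mul ..).symm
    _ ≤ q * Ut := mul_le_mul_of_nonneg_right hq hU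

theorem stmt_10 {ι : Type} (t : ℕ) (ht : 2 ≤ t)
    (Gneg Gpos : ℕ → Finset ι) (P Δg : ι → ℝ)
    (FS1 RFt Δ Lt Ut q0 q1 : ℝ)
    (hFS1 : 0 < FS1) (hL : Lt ≤ 0) (hU : 0 ≤ Ut)
    (hPneg : ∀ k ∈ Finset.Icc 2 t, ∀ g ∈ Gneg k, 0 ≤ P g)
    (hPpos : ∀ k ∈ Finset.Icc 2 t, ∀ g ∈ Gpos k, 0 ≤ P g)
    (hΔneg : ∀ k ∈ Finset.Icc 2 t, ∀ g ∈ Gneg k, Lt ≤ Δg g ∧ Δg g ≤ Ut)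
    (hΔpos : ∀ k ∈ Finset.Icc 2 t, ∀ g ∈ Gpos k, Lt ≤ Δg g ∧ Δg g ≤ Ut)
    (hq0 : ∑ k ∈ Finset.Icc 2 t, ∑ g ∈ Gneg k, P g ≤ q0)
    (hq1 : ∑ k ∈ Finset.Icc 2 t, ∑ g ∈ Gpos k, P g ≤ q1)
    (hid : FS1 * Δ = RFt +
      ∑ k ∈ Finset.Icc 2 t, ∑ g ∈ Gneg k, P g * Δg g -
      ∑ k ∈ Finset.Icc 2 t, ∑ g ∈ Gpos k, P g * Δg g) :
    RFt / FS1 + q0 * Lt / FS1 - q1 * Ut / FS1 ≤ Δ ∧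
    Δ ≤ RFt / FS1 + q0 * Ut / FS1 - q1 * Lt / FS1 := by
  obtain ⟨hn1, hn2⟩ := sum_bounds t Gneg P Δg Lt Ut q0 hL hU hPneg hΔneg hq0
  obtain ⟨hp1, hp2⟩ := sum_bounds t Gpos P Δg Lt Ut q1 hL hU hPpos hΔpos hq1
  have h1 : RFt + q0 * Lt - q1 * Ut ≤ FS1 * Δ := by rw [hid]; linarith
  have h2 : FS1 * Δ ≤ RFt + q0 * Ut - q1 * Lt := by rw [hid]; linarith
  constructor
  · rw [← add_div, ← sub_div, div_le_iff₀ hFS1]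
    linarith [mul_comm FS1 Δ]
  · rw [← add_div, ← sub_div, le_div_iff₀ hFS1]
    linarith [mul_comm FS1 Δ]
end

section
/- Let FS : ℕ → ℝ with FS 1 > 0, L ≤ 0 ≤ U, and for fixed t ≥ 2 suppose FS₁·Δ = RF_t + Σ_{k=2}^t ρ_k·δ_k where ρ_k = FS_{k-1} - FS_k and each δ_k ∈ [L, U]. Then Δ ≥ RF_t/FS₁ + L·(FS₁ - FS_t)/FS₁ + (U - L)·Σ_{k=2}^t [FS_{k-1} < FS_k]·(FS_{k-1} - FS_k)/FS₁, and Δ ≤ RF_t/FS₁ + U·(FS₁ - FS_t)/FS₁ + (L - U)·Σ_{k=2}^t [FS_{k-1} < FS_k]·(FS_{k-1} - FS_k)/FS₁, where [·] is the indicator. -/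
lemma tele_aux (FS : ℕ → ℝ) : ∀ t, 2 ≤ t →
    ∑ k ∈ Finset.Icc 2 t, (FS (k - 1) - FS k) = FS 1 - FS t := by
  intro t ht
  induction t with
  | zero => omega
  | succ n ih =>
    rcases Nat.lt_or_ge n 2 with h | h
    · interval_cases n
      · omega
      · simp
    · rw [Finset.sum_Icc_succ_top (by omega : 2 ≤ n + 1), ih h]
      simp
      try ring

theorem stmt_11 (FS : ℕ → ℝ) (hFS1 : 0 < FS 1) (L U : ℝ) (hL : L ≤ 0) (hU : 0 ≤ U)
    (t : ℕ) (ht : 2 ≤ t) (δ : ℕ → ℝ) (RFt Δ : ℝ)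
    (hδ : ∀ k ∈ Finset.Icc 2 t, L ≤ δ k ∧ δ k ≤ U)
    (hid : FS 1 * Δ = RFt + ∑ k ∈ Finset.Icc 2 t, (FS (k - 1) - FS k) * δ k) :
    (RFt / FS 1 + L * (FS 1 - FS t) / FS 1 +
      (U - L) * ∑ k ∈ Finset.Icc 2 t,
        (if FS (k - 1) < FS k then FS (k - 1) - FS k else 0) / FS 1 ≤ Δ) ∧
    (Δ ≤ RFt / FS 1 + U * (FS 1 - FS t) / FS 1 +
      (L - U) * ∑ k ∈ Finset.Icc 2 t,
        (if FS (k - 1) < FS k then FS (k - 1) - FS k else 0) / FS 1) := by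
  set S : ℝ := ∑ k ∈ Finset.Icc 2 t,
      (if FS (k - 1) < FS k then FS (k - 1) - FS k else 0) with hS
  have hsumdiv : ∑ k ∈ Finset.Icc 2 t,
      (if FS (k - 1) < FS k then FS (k - 1) - FS k else 0) / FS 1 = S / FS 1 := by
    rw [hS, Finset.sum_div]
  have htel := tele_aux FS t ht
  have hT := hid
  have hlow : L * (FS 1 - FS t) + (U - L) * S ≤
      ∑ k ∈ Finset.Icc 2 t, (FS (k - 1) - FS k) * δ k := by
    rw [← htel, Finset.mul_sum, hS, Finset.mul_sum, ← Finset.sum_add_distrib]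
    apply Finset.sum_le_sum
    intro k hk
    obtain ⟨h1, h2⟩ := hδ k hk
    by_cases hc : FS (k - 1) < FS k
    · simp only [if_pos hc]
      have : (FS (k - 1) - FS k) * U ≤ (FS (k - 1) - FS k) * δ k := by
        apply mul_le_mul_of_nonpos_left h2 (by linarith)
      nlinarith
    · simp only [if_neg hc]
      have hge : 0 ≤ FS (k - 1) - FS k := by push_neg at hc; linarith
      nlinarith
  have hhigh : ∑ k ∈ Finset.Icc 2 t, (FS (k - 1) - FS k) * δ k ≤
      U * (FS 1 - FS t) + (L - U) * S := by
    rw [← htel, Finset.mul_sum, hS, Finset.mul_sum, ← Finset.sum_add_distrib]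
    apply Finset.sum_le_sum
    intro k hk
    obtain ⟨h1, h2⟩ := hδ k hk
    by_cases hc : FS (k - 1) < FS k
    · simp only [if_pos hc]
      nlinarith
    · simp only [if_neg hc]
      have hge : 0 ≤ FS (k - 1) - FS k := by push_neg at hc; linarith
      nlinarith
  set T : ℝ := ∑ k ∈ Finset.Icc 2 t, (FS (k - 1) - FS k) * δ k with hTdef
  have hΔ : Δ = (RFt + T) / FS 1 := by
    field_simp
    linarith [hid]
  constructor
  · rw [hsumdiv, hΔ]
    have key : RFt / FS 1 + L * (FS 1 - FS t) / FS 1 + (U - L) * (S / FS 1)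
        = (RFt + (L * (FS 1 - FS t) + (U - L) * S)) / FS 1 := by ring
    rw [key]
    exact (div_le_div_iff_of_pos_right hFS1).mpr (by linarith)
  · rw [hsumdiv, hΔ]
    have key : RFt / FS 1 + U * (FS 1 - FS t) / FS 1 + (L - U) * (S / FS 1)
        = (RFt + (U * (FS 1 - FS t) + (L - U) * S)) / FS 1 := by ring
    rw [key]
    exact (div_le_div_iff_of_pos_right hFS1).mpr (by linarith)
end

section
/- Let c > 0 (c = FS₁) and for a fixed t ≥ 2 suppose c·Δ = RF_t + Σ_{k=2}^t Σ_{g∈G⁻_k} P(g)·Δ(g) - Σ_{k=2}^t Σ_{g∈G⁺_k} P(g)·Δ(g) with all P(g) ≥ 0 and each Δ(g) ∈ [L, U] (no sign restriction on L, U, just L ≤ U). Suppose Σ_{neg} P(g) ∈ [max{c - f, 0}, q₀] and Σ_{pos} P(g) ∈ [max{f - c, 0}, q₁] where f = FS_t and Σ_neg P(g) - Σ_pos P(g) = c - f. Then Δ ≥ RF_t/c + ([L<0]·q₀ + [L≥0]·max{c-f,0})·L/c - ([U≥0]·q₁ + [U<0]·max{f-c,0})·U/c. -/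
theorem stmt_16 {ι : Type} (t : ℕ) (ht : 2 ≤ t)
    (Gneg Gpos : ℕ → Finset ι) (P Δg : ι → ℝ)
    (c f RFt Δ L U q0 q1 : ℝ)
    (hc : 0 < c) (hLU : L ≤ U)
    (hPneg : ∀ k ∈ Finset.Icc 2 t, ∀ g ∈ Gneg k, 0 ≤ P g)
    (hPpos : ∀ k ∈ Finset.Icc 2 t, ∀ g ∈ Gpos k, 0 ≤ P g)
    (hΔneg : ∀ k ∈ Finset.Icc 2 t, ∀ g ∈ Gneg k, L ≤ Δg g ∧ Δg g ≤ U)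
    (hΔpos : ∀ k ∈ Finset.Icc 2 t, ∀ g ∈ Gpos k, L ≤ Δg g ∧ Δg g ≤ U)
    (hneglb : max (c - f) 0 ≤ ∑ k ∈ Finset.Icc 2 t, ∑ g ∈ Gneg k, P g)
    (hnegub : ∑ k ∈ Finset.Icc 2 t, ∑ g ∈ Gneg k, P g ≤ q0)
    (hposlb : max (f - c) 0 ≤ ∑ k ∈ Finset.Icc 2 t, ∑ g ∈ Gpos k, P g)
    (hposub : ∑ k ∈ Finset.Icc 2 t, ∑ g ∈ Gpos k, P g ≤ q1)
    (hbal : (∑ k ∈ Finset.Icc 2 t, ∑ g ∈ Gneg k, P g) -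
            (∑ k ∈ Finset.Icc 2 t, ∑ g ∈ Gpos k, P g) = c - f)
    (hid : c * Δ = RFt +
      ∑ k ∈ Finset.Icc 2 t, ∑ g ∈ Gneg k, P g * Δg g -
      ∑ k ∈ Finset.Icc 2 t, ∑ g ∈ Gpos k, P g * Δg g) :
    RFt / c + ((if L < 0 then q0 else max (c - f) 0) * L) / c -
      ((if 0 ≤ U then q1 else max (f - c) 0) * U) / c ≤ Δ := by
  set Sneg := ∑ k ∈ Finset.Icc 2 t, ∑ g ∈ Gneg k, P g with hSneg
  set Spos := ∑ k ∈ Finset.Icc 2 t, ∑ g ∈ Gpos k, P g with hSpos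
  have h1 : Sneg * L ≤ ∑ k ∈ Finset.Icc 2 t, ∑ g ∈ Gneg k, P g * Δg g := by
    rw [hSneg, Finset.sum_mul]
    refine Finset.sum_le_sum fun k hk => ?_
    rw [Finset.sum_mul]
    exact Finset.sum_le_sum fun g hg =>
      mul_le_mul_of_nonneg_left (hΔneg k hk g hg).1 (hPneg k hk g hg)
  have h2 : ∑ k ∈ Finset.Icc 2 t, ∑ g ∈ Gpos k, P g * Δg g ≤ Spos * U := by
    rw [hSpos, Finset.sum_mul]
    refine Finset.sum_le_sum fun k hk => ?_
    rw [Finset.sum_mul]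
    exact Finset.sum_le_sum fun g hg =>
      mul_le_mul_of_nonneg_left (hΔpos k hk g hg).2 (hPpos k hk g hg)
  have hlo : (if L < 0 then q0 else max (c - f) 0) * L ≤ Sneg * L := by
    split_ifs with h
    · exact mul_le_mul_of_nonpos_right hnegub h.le
    · exact mul_le_mul_of_nonneg_right hneglb (not_lt.1 h)
  have hhi : Spos * U ≤ (if 0 ≤ U then q1 else max (f - c) 0) * U := by
    split_ifs with h
    · exact mul_le_mul_of_nonneg_right hposub h
    · exact mul_le_mul_of_nonpos_right hposlb (not_le.1 h).le
  rw [← add_div, ← sub_div, div_le_iff₀ hc]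
  nlinarith [h1, h2, hlo, hhi]
end
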